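/- Let V be an n-dimensional vector space over F_q with k | n, where n ≥ 2k. Then V admits a k-spread: a family of k-dimensional subspaces such that every 1-dimensional subspace of V is contained in exactly one member of the family. -/

import Mathlib

open Polynomial Module

noncomputable section

universe u

lemma exists_finite_ext (K : Type u) [Field K] [Fintype K] (k : ℕ) (hk : k ≠ 0) :
    ∃ (L : Type u) (_ : Field L) (_ : Algebra K L),
      FiniteDimensional K L ∧ Module.finrank K L = k := by
  classical
  obtain ⟨p, hp⟩ := CharP.exists K
  haveI := hp
  have hpp : p.Prime := (CharP.char_is_prime K p)
  haveI : Fact p.Prime := ⟨hpp⟩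
  obtain ⟨a, _, hcard⟩ := FiniteField.card K p
  set n : ℕ := a * k with hn
  have hn0 : n ≠ 0 := by positivity
  set g : K[X] := X ^ p ^ n - X with hg
  let L := SplittingField g
  haveI : FiniteDimensional K L := by dsimp only [L]; infer_instance
  haveI : Finite L := Module.finite_of_finite K
  haveI : Fintype L := Fintype.ofFinite L
  haveI : CharP L p := charP_of_injective_algebraMap (algebraMap K L).injective p
  have hp1 : 1 < p := hpp.one_lt
  have aux : g ≠ 0 := FiniteField.X_pow_card_pow_sub_X_ne_zero _ hn0 hp1
  have hsep : g.Separable := galois_poly_separable p _ (dvd_pow (dvd_refl p) hn0)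
  have key : Fintype.card (g.rootSet L) = g.natDegree :=
    card_rootSet_eq_natDegree hsep (SplittingField.splits g)
  have nat_degree_eq : g.natDegree = p ^ n :=
    FiniteField.X_pow_card_pow_sub_X_natDegree_eq _ hn0 hp1
  rw [nat_degree_eq] at key
  refine ⟨L, inferInstance, inferInstance, inferInstance, ?_⟩
  suffices huniv : g.rootSet L = Set.univ by
    simp_rw [huniv, ← Fintype.ofEquiv_card (Equiv.Set.univ _)] at key
    have key2 : Nat.card L = p ^ n := by
      rw [← key, Nat.card_eq_fintype_card]; congr 1; exact Subsingleton.elim _ _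
    rw [Nat.card_eq_fintype_card, card_eq_pow_finrank (K := K) (V := L), hcard, ← pow_mul] at key2
    have h2 := Nat.pow_right_injective hpp.two_le key2
    exact Nat.eq_of_mul_eq_mul_left a.pos (h2.trans hn)
  rw [Set.eq_univ_iff_forall]
  suffices h : ∀ (x) (_ : x ∈ (⊤ : Subalgebra K L)), x ∈ g.rootSet L by simpa using h
  rw [← SplittingField.adjoin_rootSet]
  simp_rw [Algebra.mem_adjoin_iff]
  intro x hx
  have hchar : p ≠ 0 := hpp.ne_zero
  refine Subring.closure_induction ?_ ?_ ?_ ?_ ?_ ?_ hx <;> simp_rw [mem_rootSet_of_ne aux]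
  · rintro x (⟨r, rfl⟩ | hx)
    · have hpn : p ^ n = Fintype.card K ^ k := by rw [hcard, ← pow_mul]
      have hr : r ^ p ^ n = r := by rw [hpn]; exact FiniteField.pow_card_pow k r
      simp only [g, map_sub, map_pow, aeval_X]
      rw [← map_pow, hr, sub_self]
    · rwa [mem_rootSet_of_ne aux] at hx
  · rw [← coeff_zero_eq_aeval_zero']
    simp only [g, coeff_X_pow, coeff_X_zero, sub_zero, _root_.map_eq_zero, ite_eq_right_iff,
      one_ne_zero, coeff_sub]
    intro hzero
    exact Nat.not_lt_zero 1 (eq_zero_of_pow_eq_zero hzero.symm ▸ hp1)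
  · simp [g]
  · simp only [g, aeval_X_pow, aeval_X, map_sub, add_pow_char_pow, sub_eq_zero]
    intro x y _ _ hx hy
    rw [hx, hy]
  · intro x _ hx
    simp only [g, sub_eq_zero, aeval_X_pow, aeval_X, map_sub, sub_neg_eq_add] at *
    rw [neg_pow, hx, neg_one_pow_char_pow]
    ring
  · simp only [g, aeval_X_pow, aeval_X, map_sub, mul_pow, sub_eq_zero]
    intro x y _ _ hx hy
    rw [hx, hy]

theorem stmt_8 (q n k : ℕ) (K : Type*) [Field K] [Fintype K] (hq : Fintype.card K = q)
    (V : Type*) [AddCommGroup V] [Module K V] [FiniteDimensional K V]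
    (hV : Module.finrank K V = n)
    (hk : 0 < k) (hdvd : k ∣ n) (hn : 2 * k ≤ n) :
    ∃ S : Finset (Submodule K V),
      (∀ W ∈ S, Module.finrank K W = k) ∧
      (∀ v : Submodule K V, Module.finrank K v = 1 → ∃! W, W ∈ S ∧ v ≤ W) := by
  classical
  subst hq
  subst hV
  obtain ⟨L, _, _, hfdL, hLk⟩ := exists_finite_ext K k hk.ne'
  obtain ⟨m, hm⟩ := hdvd
  let M := Fin m → L
  haveI : FiniteDimensional K M := Module.Finite.trans L M
  have hM : Module.finrank K M = Module.finrank K V := by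
    rw [← Module.finrank_mul_finrank K L M, hLk, Module.finrank_fin_fun, hm]
  let e : M ≃ₗ[K] V := LinearEquiv.ofFinrankEq M V hM
  haveI : Finite V := Module.finite_of_finite K
  haveI : Finite (Submodule K V) :=
    Finite.of_injective (fun W => (W : Set V)) SetLike.coe_injective
  let P : Set (Submodule K V) :=
    {W | ∃ U : Submodule L M, Module.finrank L U = 1 ∧
      W = (U.restrictScalars K).map (e : M →ₗ[K] V)}
  refine ⟨(Set.toFinite P).toFinset, ?_, ?_⟩
  · intro W hW
    rw [Set.Finite.mem_toFinset] at hW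
    obtain ⟨U, hU1, rfl⟩ := hW
    rw [LinearEquiv.finrank_map_eq]
    have h1 : Module.finrank K (U.restrictScalars K) = Module.finrank K U :=
      ((Submodule.restrictScalarsEquiv K L M U).restrictScalars K).finrank_eq
    rw [h1, ← Module.finrank_mul_finrank K L U, hLk, hU1, mul_one]
  · intro v hv
    have hvbot : v ≠ ⊥ := by
      intro h; rw [h, finrank_bot] at hv; exact one_ne_zero hv.symm
    obtain ⟨x, hxv, hx0⟩ := Submodule.exists_mem_ne_zero_of_ne_bot hvbot
    have hvspan : v = Submodule.span K {x} := by
      refine (Submodule.eq_of_le_of_finrank_le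
        (Submodule.span_le.mpr (by simpa using hxv)) ?_).symm
      rw [hv, finrank_span_singleton hx0]
    set y := e.symm x with hy
    have hy0 : y ≠ 0 := fun h => hx0 (by rwa [LinearEquiv.map_eq_zero_iff] at h)
    have hey : e y = x := e.apply_symm_apply x
    refine ⟨((Submodule.span L {y}).restrictScalars K).map (e : M →ₗ[K] V),
      ⟨?_, ?_⟩, ?_⟩
    · rw [Set.Finite.mem_toFinset]
      exact ⟨Submodule.span L {y}, finrank_span_singleton hy0, rfl⟩
    · rw [hvspan, Submodule.span_le, Set.singleton_subset_iff]
      exact ⟨y, Submodule.mem_span_singleton_self y, hey⟩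
    · rintro W' ⟨hW'P, hvW'⟩
      rw [Set.Finite.mem_toFinset] at hW'P
      obtain ⟨U, hU1, rfl⟩ := hW'P
      have hxW' : x ∈ (U.restrictScalars K).map (e : M →ₗ[K] V) := hvW' hxv
      obtain ⟨z, hzU, hzx⟩ := hxW'
      have hzy : z = y := by
        rw [hy, ← hzx]; exact (e.symm_apply_apply z).symm
      have hyU : y ∈ U := by rwa [hzy] at hzU
      have : Submodule.span L {y} = U := by
        refine Submodule.eq_of_le_of_finrank_le
          (Submodule.span_le.mpr (Set.singleton_subset_iff.mpr hyU)) ?_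
        rw [hU1, finrank_span_singleton hy0]
      rw [this]
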